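/- Let D be an m×n real matrix, λ_F ≥ 0, λ_L ≥ 0, λ_NI ≥ 0, and let Y be a random vector in ℝⁿ on a probability space such that each Y_i, each β̂^{FLNI}_i(Y, λ_F, λ_L, λ_NI), and each β̂^{FL}_i(Y − (λ_NI/2)Dᵀ1, λ_NI/2 + λ_F, λ_L) is square-integrable (so all covariances below are defined). Set Y' = Y − (λ_NI/2)Dᵀ1. Then Σ_{i=1}^n Cov[β̂^{FLNI}_i(Y, λ_F, λ_L, λ_NI), Y_i] = Σ_{i=1}^n Cov[β̂^{FL}_i(Y', λ_NI/2 + λ_F, λ_L), Y'_i]; that is, the (covariance) degrees of freedom of the fused lasso nearly-isotonic estimator equals that of the fused lasso estimator applied to the shifted data. -/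

import Mathlib

open Finset MeasureTheory ProbabilityTheory

/-- The fused lasso nearly-isotonic objective
`F(β) = (1/2)‖y − β‖₂² + λ_F Σ_j |(Dβ)_j| + λ_L Σ_i |β_i| + λ_NI Σ_j max((Dβ)_j, 0)`. -/
noncomputable def flniObj {n m : ℕ} (D : Matrix (Fin m) (Fin n) ℝ)
    (y : Fin n → ℝ) (lF lL lNI : ℝ) (β : Fin n → ℝ) : ℝ :=
  (1 / 2) * ∑ i, (y i - β i) ^ 2 + lF * ∑ j, |D.mulVec β j|
    + lL * ∑ i, |β i| + lNI * ∑ j, max (D.mulVec β j) 0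

/-- `Cov[U, V] = E[UV] − E[U]E[V]`. -/
noncomputable def cov {Ω : Type*} [MeasureSpace Ω] (U V : Ω → ℝ) : ℝ :=
  (∫ ω, U ω * V ω) - (∫ ω, U ω) * (∫ ω, V ω)

lemma sum_mulVec_eq {n m : ℕ} (D : Matrix (Fin m) (Fin n) ℝ) (β : Fin n → ℝ) :
    ∑ j, D.mulVec β j = ∑ i, D.transpose.mulVec 1 i * β i := by
  simp [Matrix.mulVec, dotProduct, Finset.sum_mul]
  rw [Finset.sum_comm]

lemma max_eq_half (x : ℝ) : max x 0 = (|x| + x) / 2 := by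
  rcases le_total x 0 with h | h
  · rw [max_eq_right h, abs_of_nonpos h]; ring
  · rw [max_eq_left h, abs_of_nonneg h]; ring

lemma obj_shift {n m : ℕ} (D : Matrix (Fin m) (Fin n) ℝ) (lF lL lNI : ℝ)
    (y β : Fin n → ℝ) :
    flniObj D y lF lL lNI β
      = flniObj D (y - (lNI / 2) • D.transpose.mulVec 1) (lNI / 2 + lF) lL 0 β
        + ((lNI / 2) * ∑ i, D.transpose.mulVec 1 i * y i
           - (1 / 2) * ∑ i, ((lNI / 2) * D.transpose.mulVec 1 i) ^ 2) := by
  set c := D.transpose.mulVec 1 with hc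
  have hmax : ∑ j, max (D.mulVec β j) 0
      = ((∑ j, |D.mulVec β j|) + ∑ i, c i * β i) / 2 := by
    rw [← sum_mulVec_eq]
    simp only [max_eq_half]
    rw [← Finset.sum_div, Finset.sum_add_distrib]
  have hq : (1 / 2 : ℝ) * ∑ i, (y i - β i) ^ 2 + (lNI / 2) * ∑ i, c i * β i
      = (1 / 2) * ∑ i, ((y - (lNI / 2) • c) i - β i) ^ 2
        + (lNI / 2) * ∑ i, c i * y i - (1 / 2) * ∑ i, ((lNI / 2) * c i) ^ 2 := by
    simp only [Pi.sub_apply, Pi.smul_apply, smul_eq_mul, Finset.mul_sum,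
      ← Finset.sum_add_distrib, ← Finset.sum_sub_distrib]
    exact Finset.sum_congr rfl fun i _ => by ring
  unfold flniObj
  rw [hmax]
  linarith [hq]

lemma min_unique {n m : ℕ} (D : Matrix (Fin m) (Fin n) ℝ) {lF lL lNI : ℝ}
    (hF : 0 ≤ lF) (hL : 0 ≤ lL) (hNI : 0 ≤ lNI) (y : Fin n → ℝ) {a b : Fin n → ℝ}
    (ha : ∀ β, flniObj D y lF lL lNI a ≤ flniObj D y lF lL lNI β)
    (hb : ∀ β, flniObj D y lF lL lNI b ≤ flniObj D y lF lL lNI β) : a = b := by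
  set mpt : Fin n → ℝ := (2 : ℝ)⁻¹ • (a + b) with hm
  have hmv : ∀ j, D.mulVec mpt j = (D.mulVec a j + D.mulVec b j) / 2 := by
    intro j
    rw [hm, Matrix.mulVec_smul, Matrix.mulVec_add]
    simp; ring
  have h1 : ∑ i, (y i - mpt i) ^ 2
      = ((∑ i, (y i - a i) ^ 2) + ∑ i, (y i - b i) ^ 2) / 2
        - (1 / 4) * ∑ i, (a i - b i) ^ 2 := by
    rw [← Finset.sum_add_distrib, Finset.sum_div, Finset.mul_sum, ← Finset.sum_sub_distrib]
    refine Finset.sum_congr rfl fun i _ => ?_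
    simp only [hm, Pi.smul_apply, Pi.add_apply, smul_eq_mul]
    ring
  have h2 : ∑ j, |D.mulVec mpt j| ≤ ((∑ j, |D.mulVec a j|) + ∑ j, |D.mulVec b j|) / 2 := by
    rw [← Finset.sum_add_distrib, Finset.sum_div]
    refine Finset.sum_le_sum fun j _ => ?_
    rw [hmv j, abs_div, abs_of_pos (by norm_num : (0:ℝ) < 2)]
    exact div_le_div_of_nonneg_right (abs_add_le _ _) (by norm_num)
  have h3 : ∑ i, |mpt i| ≤ ((∑ i, |a i|) + ∑ i, |b i|) / 2 := by
    rw [← Finset.sum_add_distrib, Finset.sum_div]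
    refine Finset.sum_le_sum fun i _ => ?_
    simp only [hm, Pi.smul_apply, Pi.add_apply, smul_eq_mul]
    rw [show (2:ℝ)⁻¹ * (a i + b i) = (a i + b i)/2 by ring]
    rw [abs_div, abs_of_pos (by norm_num : (0:ℝ) < 2)]
    exact div_le_div_of_nonneg_right (abs_add_le _ _) (by norm_num)
  have h4 : ∑ j, max (D.mulVec mpt j) 0
      ≤ ((∑ j, max (D.mulVec a j) 0) + ∑ j, max (D.mulVec b j) 0) / 2 := by
    rw [← Finset.sum_add_distrib, Finset.sum_div]
    refine Finset.sum_le_sum fun j _ => ?_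
    rw [hmv j]
    have hA := le_max_left (D.mulVec a j) 0
    have hB := le_max_left (D.mulVec b j) 0
    have hA0 := le_max_right (D.mulVec a j) 0
    have hB0 := le_max_right (D.mulVec b j) 0
    exact max_le (by linarith) (by linarith)
  have hab : flniObj D y lF lL lNI a = flniObj D y lF lL lNI b :=
    le_antisymm (ha b) (hb a)
  have hmid := ha mpt
  have key : flniObj D y lF lL lNI mpt
      ≤ (flniObj D y lF lL lNI a + flniObj D y lF lL lNI b) / 2
        - (1 / 8) * ∑ i, (a i - b i) ^ 2 := by
    unfold flniObj
    have k2 := mul_le_mul_of_nonneg_left h2 hF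
    have k3 := mul_le_mul_of_nonneg_left h3 hL
    have k4 := mul_le_mul_of_nonneg_left h4 hNI
    rw [h1]
    linarith [k2, k3, k4]
  have hsum : ∑ i, (a i - b i) ^ 2 ≤ 0 := by
    rw [hab] at key hmid
    nlinarith [key, hmid]
  have hzero : ∀ i ∈ Finset.univ, (a i - b i) ^ 2 = 0 := by
    intro i _
    have hnn : ∀ i ∈ (Finset.univ : Finset (Fin n)), 0 ≤ (a i - b i) ^ 2 :=
      fun i _ => sq_nonneg _
    have := (Finset.sum_eq_zero_iff_of_nonneg hnn).mp
      (le_antisymm hsum (Finset.sum_nonneg hnn))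
    exact this i (Finset.mem_univ i)
  funext i
  have hz := hzero i (Finset.mem_univ i)
  have : a i - b i = 0 := by nlinarith [hz]
  linarith

lemma cov_sub_const {Ω : Type*} [MeasureSpace Ω] [IsProbabilityMeasure (ℙ : Measure Ω)]
    (U V : Ω → ℝ) (k : ℝ) (hU : MemLp U 2 ℙ) (hV : MemLp V 2 ℙ) :
    cov U (fun ω => V ω - k) = cov U V := by
  have hUi : Integrable U ℙ := hU.integrable one_le_two
  have hVi : Integrable V ℙ := hV.integrable one_le_two
  have hUV : Integrable (fun ω => U ω * V ω) ℙ := by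
    have := (hV.smul hU (r := 1)).integrable le_rfl
    exact this
  have h1 : (∫ ω, U ω * (V ω - k)) = (∫ ω, U ω * V ω) - k * ∫ ω, U ω := by
    have : (fun ω => U ω * (V ω - k)) = fun ω => U ω * V ω - k * U ω := by
      funext ω; ring
    rw [this, integral_sub hUV (hUi.const_mul k), integral_const_mul]
  have h2 : (∫ ω, (V ω - k)) = (∫ ω, V ω) - k := by
    rw [integral_sub hVi (integrable_const k), integral_const]
    simp
  unfold cov
  rw [h1, h2]
  ring

/-- The covariance degrees of freedom of the fused lasso nearly-isotonic estimator
equals that of the fused lasso estimator applied to the shifted data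
`Y' = Y − (λ_NI/2)Dᵀ1` at penalties `(λ_NI/2 + λ_F, λ_L)`. -/
theorem df_flni_eq_df_fl_shifted {Ω : Type*} [MeasureSpace Ω]
    [IsProbabilityMeasure (ℙ : Measure Ω)]
    {n m : ℕ} (D : Matrix (Fin m) (Fin n) ℝ)
    (lF lL lNI : ℝ) (hF : 0 ≤ lF) (hL : 0 ≤ lL) (hNI : 0 ≤ lNI)
    (Y Y' : Ω → Fin n → ℝ)
    (hY' : ∀ ω, Y' ω = Y ω - (lNI / 2) • D.transpose.mulVec 1)
    (bFLNI bFL : (Fin n → ℝ) → (Fin n → ℝ))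
    (hbFLNI : ∀ y β, flniObj D y lF lL lNI (bFLNI y) ≤ flniObj D y lF lL lNI β)
    (hbFL : ∀ y β,
      flniObj D y (lNI / 2 + lF) lL 0 (bFL y) ≤ flniObj D y (lNI / 2 + lF) lL 0 β)
    (hY2 : ∀ i, MemLp (fun ω => Y ω i) 2 ℙ)
    (hbFLNI2 : ∀ i, MemLp (fun ω => bFLNI (Y ω) i) 2 ℙ)
    (hbFL2 : ∀ i, MemLp (fun ω => bFL (Y' ω) i) 2 ℙ) :
    ∑ i, cov (fun ω => bFLNI (Y ω) i) (fun ω => Y ω i) =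
      ∑ i, cov (fun ω => bFL (Y' ω) i) (fun ω => Y' ω i) := by
  have heq : ∀ ω, bFLNI (Y ω) = bFL (Y' ω) := by
    intro ω
    refine min_unique D hF hL hNI (Y ω) (hbFLNI (Y ω)) ?_
    intro β
    rw [obj_shift D lF lL lNI (Y ω) (bFL (Y' ω)), obj_shift D lF lL lNI (Y ω) β,
      ← hY' ω]
    exact add_le_add_left (hbFL (Y' ω) β) _
  refine Finset.sum_congr rfl fun i _ => ?_
  have hUeq : (fun ω => bFLNI (Y ω) i) = (fun ω => bFL (Y' ω) i) :=
    funext fun ω => by rw [heq ω]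
  have hVeq : (fun ω => Y' ω i)
      = fun ω => Y ω i - (lNI / 2) * D.transpose.mulVec 1 i :=
    funext fun ω => by rw [hY' ω]; simp
  rw [hUeq, hVeq, cov_sub_const _ _ _ (hbFL2 i) (hY2 i)]
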